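/- arXiv:1908.03519 — 2 statements merged into one kernel-verified Lean document; each statement's English description precedes it below -/
import Mathlib

section
/- Let A be a real m×n matrix such that A·Aᵀ is invertible, let W ∈ ℝⁿ and Z ∈ ℝᵐ. Define W̃ = W + Aᵀ·(A·Aᵀ)⁻¹·(Z − A·W). Then A·W̃ = Z, and for every x ∈ ℝⁿ with A·x = Z one has ‖W̃ − W‖² ≤ ‖x − W‖², with equality if and only if x = W̃. (Least-squares solution of the extrinsic consistency constraint, full-row-rank case of Theorem 3.1.) -/
open Matrix

/-- Least-squares solution of the extrinsic consistency constraint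
(full-row-rank case of Theorem 3.1): if `A * Aᵀ` is invertible, then
`W̃ = W + Aᵀ (A Aᵀ)⁻¹ (Z - A W)` satisfies `A W̃ = Z` and is the unique closest
point to `W` among solutions of `A x = Z`. -/
theorem stmt_0 {m n : ℕ} (A : Matrix (Fin m) (Fin n) ℝ)
    (hA : IsUnit (A * Aᵀ))
    (W : Fin n → ℝ) (Z : Fin m → ℝ) (Wt : Fin n → ℝ)
    (hWt : Wt = W + (Aᵀ * (A * Aᵀ)⁻¹).mulVec (Z - A.mulVec W)) :
    A.mulVec Wt = Z ∧
    ∀ x : Fin n → ℝ, A.mulVec x = Z →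
      (∑ i, (Wt i - W i) ^ 2 ≤ ∑ i, (x i - W i) ^ 2) ∧
      ((∑ i, (Wt i - W i) ^ 2 = ∑ i, (x i - W i) ^ 2) ↔ x = Wt) := by
  have hdet : IsUnit (A * Aᵀ).det := (Matrix.isUnit_iff_isUnit_det _).mp hA
  set u : Fin m → ℝ := (A * Aᵀ)⁻¹.mulVec (Z - A.mulVec W) with hu
  have hWtW : Wt - W = Aᵀ.mulVec u := by
    rw [hWt, hu, ← Matrix.mulVec_mulVec]; abel
  have hAWt : A.mulVec Wt = Z := by
    have : A.mulVec (Wt - W) = Z - A.mulVec W := by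
      rw [hWtW, Matrix.mulVec_mulVec, Matrix.mulVec_mulVec,
        Matrix.mul_nonsing_inv _ hdet, Matrix.one_mulVec]
    have h2 : A.mulVec Wt - A.mulVec W = Z - A.mulVec W := by
      rwa [← Matrix.mulVec_sub]
    have := congrArg (· + A.mulVec W) h2
    simpa using this
  refine ⟨hAWt, fun x hx => ?_⟩
  have hAd : A.mulVec (x - Wt) = 0 := by
    rw [Matrix.mulVec_sub, hx, hAWt, sub_self]
  have hcross : ∑ i, (x i - Wt i) * (Wt i - W i) = 0 := by
    have : (x - Wt) ⬝ᵥ (Aᵀ.mulVec u) = (A.mulVec (x - Wt)) ⬝ᵥ u := by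
      rw [Matrix.dotProduct_mulVec, Matrix.vecMul_transpose]
    rw [hAd, zero_dotProduct] at this
    calc ∑ i, (x i - Wt i) * (Wt i - W i)
        = (x - Wt) ⬝ᵥ (Wt - W) := by simp [dotProduct]
      _ = 0 := by rw [hWtW, this]
  have hdecomp : ∑ i, (x i - W i) ^ 2
      = (∑ i, (x i - Wt i) ^ 2) + ∑ i, (Wt i - W i) ^ 2 := by
    have : ∀ i, (x i - W i) ^ 2
        = (x i - Wt i) ^ 2 + 2 * ((x i - Wt i) * (Wt i - W i)) + (Wt i - W i) ^ 2 := by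
      intro i; ring
    rw [Finset.sum_congr rfl (fun i _ => this i)]
    rw [Finset.sum_add_distrib, Finset.sum_add_distrib, ← Finset.mul_sum, hcross]
    ring
  have hnonneg : 0 ≤ ∑ i, (x i - Wt i) ^ 2 :=
    Finset.sum_nonneg fun i _ => sq_nonneg _
  constructor
  · rw [hdecomp]; linarith
  · constructor
    · intro h
      have hz : ∑ i, (x i - Wt i) ^ 2 = 0 := by rw [hdecomp] at h; linarith
      have := (Finset.sum_eq_zero_iff_of_nonneg (fun i _ => sq_nonneg (x i - Wt i))).mp hz
      funext i
      have := this i (Finset.mem_univ i)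
      have : x i - Wt i = 0 := by nlinarith [this]
      linarith
    · intro h; rw [h]
end

section
/- Let G be a finite simple graph on a vertex type V that is a tree (connected with unique paths between any two vertices), and fix a root vertex b. For each leaf l (a vertex of degree 1 with l ≠ b), let f_l : G.edgeSet → ℝ be the indicator function of the set of edges lying on the unique path in G from b to l. Then the family (f_l), indexed by the leaves l ≠ b, is linearly independent. (Corollary 3.2: the incidence matrix of edges over root-to-leaf paths in a tree has full row rank.) -/
open SimpleGraph

/-- Any walk into `l ≠ b` uses some edge incident to `l`. -/
private lemma end_edge {V : Type*} {G : SimpleGraph V} {b l : V}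
    (hl : b ≠ l) (w : G.Walk b l) : ∃ y, G.Adj l y ∧ s(l, y) ∈ w.edges := by
  obtain ⟨u, h, w', hw⟩ := w.reverse.exists_eq_cons_of_ne hl.symm
  refine ⟨u, h, ?_⟩
  have : s(l, u) ∈ w.reverse.edges := by rw [hw]; simp
  rwa [Walk.edges_reverse, List.mem_reverse] at this

/-- A degree-one vertex `l` distinct from both endpoints cannot lie on a path. -/
private lemma no_pass {V : Type*} [Fintype V] [DecidableEq V] {G : SimpleGraph V} [DecidableRel G.Adj]
    {b l l' : V} (hdeg : G.degree l = 1) (hlb : l ≠ b) (hll' : l ≠ l')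
    (w : G.Walk b l') (hp : w.IsPath) : l ∉ w.support := by
  intro hmem
  obtain ⟨y, hy, hyq⟩ := end_edge hlb.symm (w.takeUntil l hmem)
  obtain ⟨u, hu, r', hr⟩ := (w.dropUntil l hmem).exists_eq_cons_of_ne hll'
  have hur : s(l, u) ∈ (w.dropUntil l hmem).edges := by rw [hr]; simp
  have huy : u = y := by
    have hcard : (G.neighborFinset l).card = 1 := hdeg
    obtain ⟨z, hz⟩ := Finset.card_eq_one.mp hcard
    have h1 : u ∈ G.neighborFinset l := by simpa using hu
    have h2 : y ∈ G.neighborFinset l := by simpa using hy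
    rw [hz, Finset.mem_singleton] at h1 h2
    rw [h1, h2]
  have hnd : (((w.takeUntil l hmem).append (w.dropUntil l hmem)).edges).Nodup := by
    rw [w.take_spec hmem]; exact hp.edges_nodup
  rw [Walk.edges_append] at hnd
  exact (List.disjoint_of_nodup_append hnd) hyq (huy ▸ hur)

/-- Corollary 3.2: in a tree, the indicator vectors (over the edge set) of the
unique root-to-leaf paths form a linearly independent family. -/
theorem stmt_1 {V : Type*} [Fintype V] [DecidableEq V]
    (G : SimpleGraph V) [DecidableRel G.Adj]
    (hG : G.IsTree) (b : V)
    (p : ∀ l : V, G.Path b l) :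
    LinearIndependent ℝ
      (fun l : {l : V // G.degree l = 1 ∧ l ≠ b} =>
        fun e : G.edgeSet =>
          if (e : Sym2 V) ∈ (p l.1).1.edges then (1 : ℝ) else 0) := by
  rw [linearIndependent_iff']
  intro s g hsum i hi
  obtain ⟨hdeg, hlb⟩ := i.2
  obtain ⟨y, hy, hyp⟩ := end_edge (Ne.symm hlb) (p i.1).1
  have he : s(i.1, y) ∈ G.edgeSet := G.mem_edgeSet.mpr hy
  have hfe := congrFun hsum ⟨s(i.1, y), he⟩
  simp only [Finset.sum_apply, Pi.smul_apply, smul_eq_mul, Pi.zero_apply] at hfe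
  rw [Finset.sum_eq_single i] at hfe
  · simpa [hyp] using hfe
  · intro j hj hne
    have hne' : i.1 ≠ j.1 := fun h => hne (Subtype.ext h.symm)
    have hnotmem : s(i.1, y) ∉ (p j.1).1.edges := by
      intro hmem
      have hls : i.1 ∈ (p j.1).1.support := Walk.fst_mem_support_of_mem_edges _ hmem
      exact no_pass hdeg hlb hne' (p j.1).1 (p j.1).2 hls
    simp [hnotmem]
  · intro h; exact absurd hi h
end
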